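/- Let τ ∈ (0,1), α ∈ [0,2], and let (μ_l)_{l∈ℤ} be the frequencies μ_l = 2πl/(b−a) on the torus of length b−a > 0. For any square-summable Fourier coefficients (v̂_l), define w by ŵ_l = φ₁(−iτμ_l²) v̂_l where φ₁(z)=(e^z−1)/z, φ₁(0)=1. Then Σ_l (1+μ_l²)^α |ŵ_l|² ≤ C(α)² τ^{−α} Σ_l |v̂_l|², where C(α) = 2^{α/2}(1+μ_1^{−2})^{α/2}. -/

import Mathlib

/-- The entire function `φ₁(z) = (e^z − 1)/z`, with `φ₁(0) = 1`. -/
noncomputable def phi1 (z : ℂ) : ℂ := if z = 0 then 1 else (Complex.exp z - 1) / z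

lemma norm_exp_I_mul_sub_one_le (θ : ℝ) : ‖Complex.exp (θ * Complex.I) - 1‖ ≤ |θ| := by
  have h : Complex.exp (θ * Complex.I) - 1 =
      Complex.ofReal (Real.cos θ - 1) + Complex.ofReal (Real.sin θ) * Complex.I := by
    rw [Complex.exp_mul_I, ← Complex.ofReal_cos, ← Complex.ofReal_sin]
    push_cast
    ring
  rw [h, Complex.norm_add_mul_I]
  have hcos : 1 - θ ^ 2 / 2 ≤ Real.cos θ := Real.one_sub_sq_div_two_le_cos
  have hle : (Real.cos θ - 1) ^ 2 + Real.sin θ ^ 2 ≤ θ ^ 2 := by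
    have := Real.sin_sq_add_cos_sq θ
    nlinarith
  calc Real.sqrt ((Real.cos θ - 1) ^ 2 + Real.sin θ ^ 2)
      ≤ Real.sqrt (θ ^ 2) := Real.sqrt_le_sqrt hle
    _ = |θ| := Real.sqrt_sq_eq_abs θ

lemma norm_exp_I_mul_sub_one_le_two (θ : ℝ) : ‖Complex.exp (θ * Complex.I) - 1‖ ≤ 2 := by
  have h1 : ‖Complex.exp (θ * Complex.I)‖ = 1 := by
    rw [Complex.norm_exp]
    simp
  calc ‖Complex.exp (θ * Complex.I) - 1‖ ≤ ‖Complex.exp (θ * Complex.I)‖ + ‖(1 : ℂ)‖ :=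
        norm_sub_le _ _
    _ = 2 := by rw [h1]; norm_num

/-- `min 1 t ≤ t ^ e` for `t > 0`, `0 ≤ e ≤ 1`. -/
lemma min_one_le_rpow {t e : ℝ} (ht : 0 < t) (he0 : 0 ≤ e) (he1 : e ≤ 1) :
    min 1 t ≤ t ^ e := by
  rcases le_or_gt 1 t with h | h
  · exact (min_le_left _ _).trans (Real.one_le_rpow h he0)
  · refine (min_le_right _ _).trans ?_
    calc t = t ^ (1 : ℝ) := (Real.rpow_one t).symm
      _ ≤ t ^ e := Real.rpow_le_rpow_of_exponent_ge ht h.le he1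

set_option maxHeartbeats 1000000 in
/-- Parseval-side smoothing property of `φ₁(iτΔ)` on the torus of
length `b − a`: if `ŵ_l = φ₁(−iτμ_l²) v̂_l` with `μ_l = 2πl/(b−a)`, then for
`τ ∈ (0,1)` and `α ∈ [0,2]`,
`Σ_l (1+μ_l²)^α |ŵ_l|² ≤ C(α)² τ^{−α} Σ_l |v̂_l|²` with
`C(α) = 2^{α/2}(1+μ₁^{−2})^{α/2}`. -/
theorem phi1_smoothing_sum (a b τ α : ℝ) (hab : a < b)
    (hτ0 : 0 < τ) (hτ1 : τ < 1) (hα0 : 0 ≤ α) (hα2 : α ≤ 2)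
    (μ : ℤ → ℝ) (hμ : ∀ l, μ l = 2 * Real.pi * l / (b - a))
    (v : ℤ → ℂ) (hv : Summable fun l => ‖v l‖ ^ 2)
    (w : ℤ → ℂ) (hw : ∀ l, w l = phi1 (-Complex.I * (τ : ℂ) * ((μ l : ℝ) : ℂ) ^ 2) * v l) :
    (Summable fun l => (1 + (μ l) ^ 2) ^ α * ‖w l‖ ^ 2) ∧
      (∑' l, (1 + (μ l) ^ 2) ^ α * ‖w l‖ ^ 2) ≤
        (2 ^ (α / 2) * (1 + ((μ 1) ^ 2)⁻¹) ^ (α / 2)) ^ 2 * τ ^ (-α) *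
          ∑' l, ‖v l‖ ^ 2 := by
  have hba : (0 : ℝ) < b - a := sub_pos.mpr hab
  have hμ1 : 0 < μ 1 := by
    rw [hμ 1]
    push_cast
    positivity
  have hμ1sq : 0 < (μ 1) ^ 2 := by positivity
  set C2 : ℝ := (2 ^ (α / 2) * (1 + ((μ 1) ^ 2)⁻¹) ^ (α / 2)) ^ 2 * τ ^ (-α) with hC2
  -- rewrite C₂ as `(2 * (1 + (μ 1)⁻²) * τ⁻¹) ^ α`
  have hKpos : (0 : ℝ) < 2 * (1 + ((μ 1) ^ 2)⁻¹) * τ⁻¹ := by positivity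
  have hC2eq : C2 = (2 * (1 + ((μ 1) ^ 2)⁻¹) * τ⁻¹) ^ α := by
    have h1 : (0:ℝ) ≤ 2 := by norm_num
    have h2 : (0:ℝ) ≤ 1 + ((μ 1) ^ 2)⁻¹ := by positivity
    rw [hC2, Real.mul_rpow (mul_nonneg h1 h2) (by positivity),
      Real.mul_rpow h1 h2, ← Real.rpow_neg_one τ, ← Real.rpow_mul hτ0.le,
      mul_pow, ← Real.rpow_natCast (2 ^ (α/2)) 2,
      ← Real.rpow_natCast ((1 + ((μ 1)^2)⁻¹) ^ (α/2)) 2,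
      ← Real.rpow_mul h1, ← Real.rpow_mul h2]
    norm_num
  have key : ∀ l, (1 + (μ l) ^ 2) ^ α * ‖w l‖ ^ 2 ≤ C2 * ‖v l‖ ^ 2 := by
    intro l
    have hwl : ‖w l‖ ^ 2 =
        ‖phi1 (-Complex.I * (τ : ℂ) * ((μ l : ℝ) : ℂ) ^ 2)‖ ^ 2 * ‖v l‖ ^ 2 := by
      rw [hw l, norm_mul, mul_pow]
    rw [hwl, ← mul_assoc]
    have hvnn : (0:ℝ) ≤ ‖v l‖ ^ 2 := by positivity
    refine mul_le_mul_of_nonneg_right ?_ hvnn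
    -- main pointwise bound
    by_cases hl : l = 0
    · subst hl
      have hμ0 : μ 0 = 0 := by rw [hμ 0]; push_cast; ring
      have hz : -Complex.I * (τ : ℂ) * ((μ (0:ℤ) : ℝ) : ℂ) ^ 2 = 0 := by
        rw [hμ0]; push_cast; ring
      rw [hz]
      have : phi1 0 = 1 := by simp [phi1]
      rw [this, hμ0]
      simp only [norm_one, one_pow, mul_one]
      rw [hC2eq]
      have hK1 : (1:ℝ) ≤ 2 * (1 + ((μ 1) ^ 2)⁻¹) * τ⁻¹ := by
        have h1 : (1:ℝ) ≤ 2 * (1 + ((μ 1) ^ 2)⁻¹) := by nlinarith [inv_nonneg.mpr hμ1sq.le]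
        have h2 : (1:ℝ) ≤ τ⁻¹ := one_le_inv_iff₀.mpr ⟨hτ0, hτ1.le⟩
        nlinarith
      calc (1 + (0:ℝ) ^ 2) ^ α = 1 := by norm_num
        _ ≤ (2 * (1 + ((μ 1) ^ 2)⁻¹) * τ⁻¹) ^ α := Real.one_le_rpow hK1 hα0
    · -- l ≠ 0
      set m := μ l with hm
      have hmsq : (μ 1) ^ 2 ≤ m ^ 2 := by
        have hml : m = μ 1 * l := by
          rw [hm, hμ l, hμ 1]
          push_cast
          field_simp
        have hl2 : (1:ℝ) ≤ (l:ℝ) ^ 2 := by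
          have : (1:ℤ) ≤ l ^ 2 := by
            rcases lt_or_gt_of_ne hl with h | h <;> nlinarith
          exact_mod_cast this
        calc (μ 1) ^ 2 = (μ 1) ^ 2 * 1 := by ring
          _ ≤ (μ 1) ^ 2 * (l:ℝ) ^ 2 := by nlinarith
          _ = m ^ 2 := by rw [hml]; ring
      have hm2pos : 0 < m ^ 2 := lt_of_lt_of_le hμ1sq hmsq
      set c : ℝ := τ * m ^ 2 with hc
      have hcpos : 0 < c := by positivity
      have hz : -Complex.I * (τ : ℂ) * ((m : ℝ) : ℂ) ^ 2 = ((-c : ℝ) : ℂ) * Complex.I := by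
        rw [hc]; push_cast; ring
      have hzne : ((-c : ℝ) : ℂ) * Complex.I ≠ 0 := by
        simp [Complex.ext_iff, hcpos.ne']
      have hnormz : ‖((-c : ℝ) : ℂ) * Complex.I‖ = c := by
        simp [abs_of_pos hcpos]
      have hphi : ‖phi1 (-Complex.I * (τ : ℂ) * ((m : ℝ) : ℂ) ^ 2)‖ =
          ‖Complex.exp (((-c : ℝ) : ℂ) * Complex.I) - 1‖ / c := by
        rw [hz, phi1, if_neg hzne, norm_div, hnormz]
      have hb1 : ‖phi1 (-Complex.I * (τ : ℂ) * ((m : ℝ) : ℂ) ^ 2)‖ ≤ 1 := by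
        rw [hphi, div_le_one hcpos]
        have := norm_exp_I_mul_sub_one_le (-c)
        rwa [abs_neg, abs_of_pos hcpos] at this
      have hb2 : ‖phi1 (-Complex.I * (τ : ℂ) * ((m : ℝ) : ℂ) ^ 2)‖ ≤ 2 / c := by
        rw [hphi]
        gcongr
        exact norm_exp_I_mul_sub_one_le_two (-c)
      have hbmin : ‖phi1 (-Complex.I * (τ : ℂ) * ((m : ℝ) : ℂ) ^ 2)‖ ≤ (2 / c) ^ (α / 2) :=
        le_trans (le_min hb1 hb2) (min_one_le_rpow (by positivity) (by linarith) (by linarith))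
      have hphin : (0:ℝ) ≤ ‖phi1 (-Complex.I * (τ : ℂ) * ((m : ℝ) : ℂ) ^ 2)‖ := norm_nonneg _
      have hsq : ‖phi1 (-Complex.I * (τ : ℂ) * ((m : ℝ) : ℂ) ^ 2)‖ ^ 2 ≤ (2 / c) ^ α := by
        have h2c : (0:ℝ) ≤ 2 / c := by positivity
        calc ‖phi1 (-Complex.I * (τ : ℂ) * ((m : ℝ) : ℂ) ^ 2)‖ ^ 2
            ≤ ((2 / c) ^ (α / 2)) ^ 2 := by
              apply pow_le_pow_left₀ hphin hbmin
          _ = (2 / c) ^ α := by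
              rw [← Real.rpow_natCast ((2/c) ^ (α/2)) 2, ← Real.rpow_mul h2c]
              norm_num
      have h1m : (0:ℝ) < 1 + m ^ 2 := by positivity
      calc (1 + m ^ 2) ^ α * ‖phi1 (-Complex.I * (τ : ℂ) * ((m : ℝ) : ℂ) ^ 2)‖ ^ 2
          ≤ (1 + m ^ 2) ^ α * (2 / c) ^ α := by
            exact mul_le_mul_of_nonneg_left hsq (Real.rpow_nonneg h1m.le α)
        _ = ((1 + m ^ 2) * (2 / c)) ^ α := (Real.mul_rpow h1m.le (by positivity)).symm
        _ ≤ (2 * (1 + ((μ 1) ^ 2)⁻¹) * τ⁻¹) ^ α := by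
            apply Real.rpow_le_rpow (by positivity) ?_ hα0
            have hEq : (1 + m ^ 2) * (2 / c) = 2 * (1 + (m ^ 2)⁻¹) * τ⁻¹ := by
              rw [hc]
              field_simp
              have hm0 : m ≠ 0 := fun h => by simp [h] at hm2pos
              rw [add_div, div_self (pow_ne_zero 2 hm0), add_comm]
            rw [hEq]
            have hinv : (m ^ 2)⁻¹ ≤ ((μ 1) ^ 2)⁻¹ := inv_anti₀ hμ1sq hmsq
            have hτinv : (0:ℝ) < τ⁻¹ := by positivity
            nlinarith
        _ = C2 := hC2eq.symm
  have hC2nn : (0:ℝ) ≤ C2 := by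
    rw [hC2eq]; exact Real.rpow_nonneg hKpos.le α
  have hsummable : Summable fun l => (1 + (μ l) ^ 2) ^ α * ‖w l‖ ^ 2 := by
    apply Summable.of_nonneg_of_le ?_ key (hv.mul_left C2)
    intro l
    have h1m : (0:ℝ) < 1 + (μ l) ^ 2 := by positivity
    positivity
  refine ⟨hsummable, ?_⟩
  calc (∑' l, (1 + (μ l) ^ 2) ^ α * ‖w l‖ ^ 2)
      ≤ ∑' l, C2 * ‖v l‖ ^ 2 := Summable.tsum_le_tsum key hsummable (hv.mul_left C2)
    _ = C2 * ∑' l, ‖v l‖ ^ 2 := tsum_mul_left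
    _ = (2 ^ (α / 2) * (1 + ((μ 1) ^ 2)⁻¹) ^ (α / 2)) ^ 2 * τ ^ (-α) *
          ∑' l, ‖v l‖ ^ 2 := by rw [hC2]
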